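/- Let G be an n-player game in which player i has player-specific Lipschitz constants λ_i with Σλ_i = Λ and λ_1 ≤ … ≤ λ_n, let L_i = max{n·λ_i/Λ, 1} (assumed integral), and form the population game G' replacing player i by L_i copies, each copy playing G against the population averages of the other groups. Then G' is (Λ/n)-Lipschitz. -/
import Mathlib


open Finset

noncomputable section

def pureStrat {m : ℕ} (j : Fin m) : Fin m → ℝ := fun j' => if j' = j then 1 else 0

def expPay {n m : ℕ} (u : (Fin n → Fin m) → ℝ) (p : Fin n → Fin m → ℝ) : ℝ :=
  ∑ a : Fin n → Fin m, (∏ i, p i (a i)) * u a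

/-- Empirical mixed strategy of group `i` in the population game with group sizes `L`. -/
def empS {n m : ℕ} {L : Fin n → ℕ} (a : (Σ i : Fin n, Fin (L i)) → Fin m) :
    Fin n → Fin m → ℝ :=
  fun i j => ((univ.filter fun ℓ : Fin (L i) => a ⟨i, ℓ⟩ = j).card : ℝ) / (L i)

/-- Payoff of copy `v = ⟨i, ℓ⟩` in the population game `g_G(L₁,…,L_n)`: player `i`'s payoff
    in `G` playing `v`'s own action against the population averages of the other groups. -/
def popPay {n m : ℕ} {L : Fin n → ℕ} (u : Fin n → (Fin n → Fin m) → ℝ)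
    (v : Σ i : Fin n, Fin (L i)) (a : (Σ i : Fin n, Fin (L i)) → Fin m) : ℝ :=
  expPay (u v.1) (Function.update (empS a) v.1 (pureStrat (a v)))

/-- Player-specific Lipschitz condition for `G`. -/
def IsMultiLip {n m : ℕ} (lam : Fin n → ℝ) (u : Fin n → (Fin n → Fin m) → ℝ) : Prop :=
  ∀ (i i' : Fin n), i' ≠ i → ∀ a a' : Fin n → Fin m,
    (∀ k, k ≠ i → a k = a' k) → |u i' a - u i' a'| ≤ lam i

lemma pureStrat_nonneg {m : ℕ} (j j' : Fin m) : 0 ≤ pureStrat j j' := by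
  unfold pureStrat; positivity

lemma pureStrat_sum {m : ℕ} (j : Fin m) : ∑ j', pureStrat j j' = 1 := by
  simp [pureStrat]

lemma prod_update_split {n m : ℕ} (p : Fin n → Fin m → ℝ) (k0 : Fin n) (q : Fin m → ℝ)
    (a : Fin n → Fin m) :
    (∏ i, (Function.update p k0 q) i (a i)) = q (a k0) * ∏ i ∈ univ.erase k0, p i (a i) := by
  rw [← Finset.mul_prod_erase _ _ (mem_univ k0), Function.update_self]
  congr 1
  refine Finset.prod_congr rfl fun i hi => ?_
  rw [Function.update_of_ne (Finset.ne_of_mem_erase hi)]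

/-- multilinearity in coordinate k0 -/
lemma expPay_decomp {n m : ℕ} (u : (Fin n → Fin m) → ℝ) (p : Fin n → Fin m → ℝ) (k0 : Fin n) :
    expPay u p = ∑ j, p k0 j * expPay u (Function.update p k0 (pureStrat j)) := by
  unfold expPay
  symm
  calc ∑ j, p k0 j * ∑ a : Fin n → Fin m, (∏ i, (Function.update p k0 (pureStrat j)) i (a i)) * u a
      = ∑ j, ∑ a : Fin n → Fin m, p k0 j * ((∏ i, (Function.update p k0 (pureStrat j)) i (a i)) * u a) := by
        simp [Finset.mul_sum]
    _ = ∑ a : Fin n → Fin m, ∑ j, p k0 j * ((∏ i, (Function.update p k0 (pureStrat j)) i (a i)) * u a) :=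
        Finset.sum_comm
    _ = ∑ a : Fin n → Fin m, (∏ i, p i (a i)) * u a := by
        refine Finset.sum_congr rfl fun a _ => ?_
        have : ∀ j, p k0 j * ((∏ i, (Function.update p k0 (pureStrat j)) i (a i)) * u a)
            = (p k0 j * pureStrat j (a k0)) * ((∏ i ∈ univ.erase k0, p i (a i)) * u a) := by
          intro j; rw [prod_update_split]; ring
        rw [Finset.sum_congr rfl fun j _ => this j, ← Finset.sum_mul]
        have hs : ∑ j, p k0 j * pureStrat j (a k0) = p k0 (a k0) := by
          simp [pureStrat, Finset.sum_ite_eq]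
        rw [hs, ← Finset.mul_prod_erase _ _ (mem_univ k0), mul_assoc]

lemma expPay_pure_eq {n m : ℕ} (u : (Fin n → Fin m) → ℝ) (p : Fin n → Fin m → ℝ)
    (k0 : Fin n) (j0 j : Fin m) :
    expPay u (Function.update p k0 (pureStrat j))
    = ∑ a : Fin n → Fin m,
        (∏ i, (Function.update p k0 (pureStrat j0)) i (a i)) * u (Function.update a k0 j) := by
  have step1 : expPay u (Function.update p k0 (pureStrat j))
      = ∑ a : Fin n → Fin m,
          (∏ i, (Function.update p k0 (pureStrat j)) i (a i)) * u (Function.update a k0 j) := by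
    unfold expPay
    refine Finset.sum_congr rfl fun a _ => ?_
    by_cases h : a k0 = j
    · rw [← h, Function.update_eq_self]
    · have hz : (∏ i, (Function.update p k0 (pureStrat j)) i (a i)) = 0 := by
        apply Finset.prod_eq_zero (mem_univ k0)
        simp [pureStrat, h]
      rw [hz, zero_mul, zero_mul]
  rw [step1]
  have hinv : Function.Involutive
      (fun a : Fin n → Fin m => Function.update a k0 ((Equiv.swap j j0) (a k0))) := by
    intro a
    funext k
    by_cases h : k = k0
    · subst h; simp
    · simp [Function.update_of_ne h]
  refine Fintype.sum_equiv (Function.Involutive.toPerm _ hinv) _ _ fun a => ?_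
  have he : (Function.Involutive.toPerm _ hinv) a = Function.update a k0 ((Equiv.swap j j0) (a k0)) := rfl
  rw [he]
  have h1 : Function.update (Function.update a k0 ((Equiv.swap j j0) (a k0))) k0 j
      = Function.update a k0 j := Function.update_idem ..
  rw [h1]
  congr 1
  rw [prod_update_split, prod_update_split]
  congr 1
  · have hiff : (Equiv.swap j j0) (a k0) = j0 ↔ a k0 = j := by
      rw [Equiv.swap_apply_eq_iff, Equiv.swap_apply_right]
    simp [pureStrat, hiff]
  · refine Finset.prod_congr rfl fun i hi => ?_
    rw [Function.update_of_ne (Finset.ne_of_mem_erase hi)]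

lemma expPay_pure_sub_le {n m : ℕ} (lam : Fin n → ℝ) (u : Fin n → (Fin n → Fin m) → ℝ)
    (hML : IsMultiLip lam u) (i' k0 : Fin n) (hne : i' ≠ k0)
    (r : Fin n → Fin m → ℝ) (hr0 : ∀ i j, 0 ≤ r i j) (hr1 : ∀ i, ∑ j, r i j = 1)
    (j1 j2 : Fin m) :
    |expPay (u i') (Function.update r k0 (pureStrat j1))
      - expPay (u i') (Function.update r k0 (pureStrat j2))| ≤ lam k0 := by
  rw [expPay_pure_eq (u i') r k0 j1 j1, expPay_pure_eq (u i') r k0 j1 j2,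
    ← Finset.sum_sub_distrib]
  set W : (Fin n → Fin m) → ℝ := fun a => ∏ i, (Function.update r k0 (pureStrat j1)) i (a i)
    with hW
  have hW0 : ∀ a, 0 ≤ W a := by
    intro a
    refine Finset.prod_nonneg fun i _ => ?_
    by_cases h : i = k0
    · subst h; simp [pureStrat_nonneg]
    · simp [Function.update_of_ne h, hr0]
  have hWsum : ∑ a : Fin n → Fin m, W a = 1 := by
    rw [hW, ← Fintype.prod_sum]
    refine Finset.prod_eq_one fun i _ => ?_
    by_cases h : i = k0
    · subst h; simp [pureStrat_sum]
    · simp only [Function.update_of_ne h]; exact hr1 i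
  calc |∑ a : Fin n → Fin m,
        (W a * u i' (Function.update a k0 j1) - W a * u i' (Function.update a k0 j2))|
      ≤ ∑ a : Fin n → Fin m,
        |W a * u i' (Function.update a k0 j1) - W a * u i' (Function.update a k0 j2)| :=
        Finset.abs_sum_le_sum_abs _ _
    _ ≤ ∑ a : Fin n → Fin m, W a * lam k0 := by
        refine Finset.sum_le_sum fun a _ => ?_
        rw [← mul_sub, abs_mul, abs_of_nonneg (hW0 a)]
        refine mul_le_mul_of_nonneg_left ?_ (hW0 a)
        refine hML k0 i' hne _ _ fun k hk => ?_
        rw [Function.update_of_ne hk, Function.update_of_ne hk]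
    _ = lam k0 := by rw [← Finset.sum_mul, hWsum, one_mul]


lemma empS_nonneg {n m : ℕ} {L : Fin n → ℕ} (a : (Σ i : Fin n, Fin (L i)) → Fin m)
    (k : Fin n) (j : Fin m) : 0 ≤ empS a k j := by
  unfold empS; positivity

lemma empS_sum {n m : ℕ} {L : Fin n → ℕ} (a : (Σ i : Fin n, Fin (L i)) → Fin m)
    (k : Fin n) (hLk : L k ≠ 0) : ∑ j, empS a k j = 1 := by
  unfold empS
  rw [← Finset.sum_div]
  rw [div_eq_one_iff_eq (by exact_mod_cast hLk)]
  rw [← Nat.cast_sum]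
  congr 1
  symm
  calc L k = (univ : Finset (Fin (L k))).card := by simp
    _ = ∑ j : Fin m, (univ.filter fun ℓ : Fin (L k) => a ⟨k, ℓ⟩ = j).card :=
      Finset.card_eq_sum_card_fiberwise fun x _ => mem_univ _

lemma popPay_step {n m : ℕ} (hn : 0 < n) (Λ : ℝ) (hΛ : 0 < Λ)
    (lam : Fin n → ℝ)
    (u : Fin n → (Fin n → Fin m) → ℝ) (hML : IsMultiLip lam u)
    (L : Fin n → ℕ) (hL : ∀ i, (L i : ℝ) = max ((n : ℝ) * lam i / Λ) 1)
    (v w : Σ i : Fin n, Fin (L i)) (hw : w ≠ v)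
    (a : (Σ i : Fin n, Fin (L i)) → Fin m) (j2 : Fin m) :
    |popPay u v a - popPay u v (Function.update a w j2)| ≤ Λ / n := by
  have hΛn : 0 ≤ Λ / n := by positivity
  have hL1 : ∀ k, (1 : ℝ) ≤ (L k : ℝ) := fun k => (hL k) ▸ le_max_right _ _
  have hLpos : ∀ k, (0 : ℝ) < (L k : ℝ) := fun k => lt_of_lt_of_le one_pos (hL1 k)
  have hLne : ∀ k, L k ≠ 0 := fun k => (Nat.cast_pos.mp (hLpos k)).ne'
  obtain ⟨k0, ℓ0⟩ := w
  obtain ⟨i, ℓv⟩ := v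
  set v : Σ i : Fin n, Fin (L i) := ⟨i, ℓv⟩ with hv
  set w : Σ i : Fin n, Fin (L i) := ⟨k0, ℓ0⟩ with hwdef
  set a' : (Σ i : Fin n, Fin (L i)) → Fin m := Function.update a w j2 with ha'
  have hvw : v ≠ w := fun h => hw h.symm
  have havv : a' v = a v := Function.update_of_ne hvw _ _
  have hmk : ∀ (ℓ ℓ' : Fin (L k0)), (⟨k0, ℓ⟩ : Σ i : Fin n, Fin (L i)) = ⟨k0, ℓ'⟩ ↔ ℓ = ℓ' := by
    intro ℓ ℓ'; simp
  have hemp : ∀ k : Fin n, k ≠ k0 → empS a' k = empS a k := by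
    intro k hk
    funext j
    unfold empS
    have hfil : (univ.filter fun ℓ : Fin (L k) => a' ⟨k, ℓ⟩ = j)
        = univ.filter fun ℓ : Fin (L k) => a ⟨k, ℓ⟩ = j := by
      refine Finset.filter_congr fun ℓ _ => ?_
      rw [show a' ⟨k, ℓ⟩ = a ⟨k, ℓ⟩ from
        Function.update_of_ne (fun h => hk (congrArg Sigma.fst h)) _ _]
    rw [hfil]
  by_cases hik : k0 = i
  · -- same group as v: the updated profile is unchanged
    have : Function.update (empS a') v.1 (pureStrat (a' v))
        = Function.update (empS a) v.1 (pureStrat (a v)) := by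
      funext k
      by_cases h : k = v.1
      · subst h; rw [Function.update_self, Function.update_self, havv]
      · rw [Function.update_of_ne h, Function.update_of_ne h, hemp k (by simpa [hik] using h)]
    unfold popPay
    rw [this, sub_self, abs_zero]
    exact hΛn
  · -- different group
    set r : Fin n → Fin m → ℝ := Function.update (empS a) i (pureStrat (a v)) with hr
    set r' : Fin n → Fin m → ℝ := Function.update (empS a') i (pureStrat (a v)) with hr'
    have hrr' : ∀ k, k ≠ k0 → r k = r' k := by
      intro k hk
      by_cases h : k = i
      · subst h; rw [hr, hr', Function.update_self, Function.update_self]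
      · rw [hr, hr', Function.update_of_ne h, Function.update_of_ne h, hemp k hk]
    have hpop : popPay u v a = expPay (u i) r ∧ popPay u v a' = expPay (u i) r' := by
      constructor
      · rfl
      · unfold popPay; rw [havv]
    rw [hpop.1, hpop.2]
    have hupd_eq : ∀ q : Fin m → ℝ, Function.update r k0 q = Function.update r' k0 q := by
      intro q
      funext k
      by_cases h : k = k0
      · subst h; rw [Function.update_self, Function.update_self]
      · rw [Function.update_of_ne h, Function.update_of_ne h, hrr' k h]
    rw [expPay_decomp (u i) r k0, expPay_decomp (u i) r' k0]
    have hsum_eq : ∑ j, r k0 j * expPay (u i) (Function.update r k0 (pureStrat j))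
        - ∑ j, r' k0 j * expPay (u i) (Function.update r' k0 (pureStrat j))
        = ∑ j, (r k0 j - r' k0 j) * expPay (u i) (Function.update r k0 (pureStrat j)) := by
      rw [← Finset.sum_sub_distrib]
      refine Finset.sum_congr rfl fun j _ => ?_
      rw [hupd_eq (pureStrat j)]
      ring
    rw [hsum_eq]
    set j1 : Fin m := a w with hj1
    by_cases hj12 : j2 = j1
    · -- no actual change
      have : a' = a := by rw [ha', hj12, hj1, Function.update_eq_self]
      have hz : ∀ j, r k0 j - r' k0 j = 0 := by
        intro j; rw [hr, hr', this, sub_self]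
      simp only [hz, zero_mul, Finset.sum_const_zero, abs_zero]
      exact hΛn
    · have hrk0 : r k0 = empS a k0 := by rw [hr, Function.update_of_ne hik]
      have hrk0' : r' k0 = empS a' k0 := by rw [hr', Function.update_of_ne hik]
      have hj1w : a w = j1 := rfl
      have haw : a' w = j2 := Function.update_self _ _ _
      have hmem : ∀ ℓ : Fin (L k0), ℓ ≠ ℓ0 → (a' ⟨k0, ℓ⟩ = a ⟨k0, ℓ⟩) := by
        intro ℓ hℓ
        exact Function.update_of_ne (fun h => hℓ ((hmk ℓ ℓ0).mp h)) _ _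
      have hkey : ∀ j, r k0 j - r' k0 j =
          ((if j = j1 then 1 else 0) - (if j = j2 then 1 else 0)) / (L k0 : ℝ) := by
        intro j
        rw [hrk0, hrk0']
        unfold empS
        rw [div_sub_div_same]
        congr 1
        by_cases h1 : j = j1
        · have hne2 : j ≠ j2 := fun h => hj12 (h ▸ h1 ▸ rfl : j2 = j1)
          have hins : (univ.filter fun ℓ : Fin (L k0) => a ⟨k0, ℓ⟩ = j)
              = insert ℓ0 (univ.filter fun ℓ : Fin (L k0) => a' ⟨k0, ℓ⟩ = j) := by
            ext ℓ
            simp only [Finset.mem_insert, Finset.mem_filter, Finset.mem_univ, true_and]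
            by_cases hℓ : ℓ = ℓ0
            · subst hℓ
              have : a ⟨k0, ℓ⟩ = j := h1 ▸ hj1w
              simp [this]
            · rw [hmem ℓ hℓ]; simp [hℓ]
          have hnotin : ℓ0 ∉ (univ.filter fun ℓ : Fin (L k0) => a' ⟨k0, ℓ⟩ = j) := by
            simp only [Finset.mem_filter, Finset.mem_univ, true_and]
            rw [show a' ⟨k0, ℓ0⟩ = j2 from haw]
            exact fun h => hne2 h.symm
          rw [hins, Finset.card_insert_of_notMem hnotin]
          push_cast
          rw [if_pos h1, if_neg hne2]
          ring
        · by_cases h2 : j = j2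
          · have hins : (univ.filter fun ℓ : Fin (L k0) => a' ⟨k0, ℓ⟩ = j)
                = insert ℓ0 (univ.filter fun ℓ : Fin (L k0) => a ⟨k0, ℓ⟩ = j) := by
              ext ℓ
              simp only [Finset.mem_insert, Finset.mem_filter, Finset.mem_univ, true_and]
              by_cases hℓ : ℓ = ℓ0
              · subst hℓ
                have : a' ⟨k0, ℓ⟩ = j := h2 ▸ haw
                simp [this]
              · rw [hmem ℓ hℓ]; simp [hℓ]
            have hnotin : ℓ0 ∉ (univ.filter fun ℓ : Fin (L k0) => a ⟨k0, ℓ⟩ = j) := by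
              simp only [Finset.mem_filter, Finset.mem_univ, true_and]
              rw [show a ⟨k0, ℓ0⟩ = j1 from hj1w]
              exact fun h => h1 h.symm
            rw [hins, Finset.card_insert_of_notMem hnotin]
            push_cast
            rw [if_neg h1, if_pos h2]
            ring
          · have heq : (univ.filter fun ℓ : Fin (L k0) => a ⟨k0, ℓ⟩ = j)
                = (univ.filter fun ℓ : Fin (L k0) => a' ⟨k0, ℓ⟩ = j) := by
              refine Finset.filter_congr fun ℓ _ => ?_
              by_cases hℓ : ℓ = ℓ0
              · subst hℓ
                rw [show a ⟨k0, ℓ⟩ = j1 from hj1w, show a' ⟨k0, ℓ⟩ = j2 from haw]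
                simp [h1, h2, (Ne.symm h1 : j1 ≠ j), (Ne.symm h2 : j2 ≠ j)]
              · rw [hmem ℓ hℓ]
            rw [heq]
            rw [if_neg h1, if_neg h2]
            ring
      have hE : ∑ j, (r k0 j - r' k0 j) * expPay (u i) (Function.update r k0 (pureStrat j))
          = (expPay (u i) (Function.update r k0 (pureStrat j1))
             - expPay (u i) (Function.update r k0 (pureStrat j2))) / (L k0 : ℝ) := by
        simp only [hkey]
        rw [Finset.sum_congr rfl fun j _ => div_mul_eq_mul_div _ _ _, ← Finset.sum_div]
        congr 1
        simp [sub_mul, Finset.sum_sub_distrib, ite_mul, Finset.sum_ite_eq']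
      rw [hE, abs_div, abs_of_pos (hLpos k0)]
      have hd : |expPay (u i) (Function.update r k0 (pureStrat j1))
          - expPay (u i) (Function.update r k0 (pureStrat j2))| ≤ lam k0 := by
        refine expPay_pure_sub_le lam u hML i k0 (fun h => hik h.symm) r ?_ ?_ j1 j2
        · intro k j
          by_cases h : k = i
          · subst h; rw [hr, Function.update_self]; exact pureStrat_nonneg _ _
          · rw [hr, Function.update_of_ne h]; exact empS_nonneg _ _ _
        · intro k
          by_cases h : k = i
          · subst h; rw [hr, Function.update_self]; exact pureStrat_sum _
          · rw [hr, Function.update_of_ne h]; exact empS_sum _ _ (hLne k)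
      calc |expPay (u i) (Function.update r k0 (pureStrat j1))
            - expPay (u i) (Function.update r k0 (pureStrat j2))| / (L k0 : ℝ)
          ≤ lam k0 / (L k0 : ℝ) := by
            exact div_le_div_of_nonneg_right hd (hLpos k0).le
        _ ≤ Λ / n := by
            rw [div_le_div_iff₀ (hLpos k0) (by exact_mod_cast hn : (0:ℝ) < n)]
            have h1 : (n : ℝ) * lam k0 / Λ ≤ (L k0 : ℝ) := (hL k0) ▸ le_max_left _ _
            have h2 : (n : ℝ) * lam k0 ≤ (L k0 : ℝ) * Λ := (div_le_iff₀ hΛ).mp h1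
            nlinarith


/-- The population game obtained from a Multi-Lipschitz game `G` with constants
    λ₁ ≤ … ≤ λ_n summing to Λ, with group sizes `L i = max{n·λ_i/Λ, 1}` (assumed integral),
    is (Λ/n)-Lipschitz. -/
theorem population_game_lipschitz (n m : ℕ) (hn : 0 < n) (Λ : ℝ) (hΛ : 0 < Λ)
    (lam : Fin n → ℝ) (hnn : ∀ i, 0 ≤ lam i) (hmono : Monotone lam)
    (hsum : ∑ i, lam i = Λ)
    (u : Fin n → (Fin n → Fin m) → ℝ) (hu : ∀ i a, 0 ≤ u i a ∧ u i a ≤ 1)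
    (hML : IsMultiLip lam u)
    (L : Fin n → ℕ) (hL : ∀ i, (L i : ℝ) = max ((n : ℝ) * lam i / Λ) 1) :
    ∀ (v : Σ i : Fin n, Fin (L i)) (a a' : (Σ i : Fin n, Fin (L i)) → Fin m),
      a v = a' v →
      |popPay u v a - popPay u v a'| ≤
        (Λ / n) * ((univ.filter fun w : Σ i : Fin n, Fin (L i) => w ≠ v ∧ a w ≠ a' w).card : ℝ) := by
  intro v
  have hΛn : 0 ≤ Λ / n := by positivity
  have main : ∀ N : ℕ, ∀ a a' : (Σ i : Fin n, Fin (L i)) → Fin m, a v = a' v →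
      (univ.filter fun w : Σ i : Fin n, Fin (L i) => w ≠ v ∧ a w ≠ a' w).card = N →
      |popPay u v a - popPay u v a'| ≤ (Λ / n) * N := by
    intro N
    induction N with
    | zero =>
      intro a a' hv hc
      have haa : a = a' := by
        funext x
        by_cases hx : x = v
        · subst hx; exact hv
        · by_contra hne
          have hmem : x ∈ univ.filter fun w : Σ i : Fin n, Fin (L i) => w ≠ v ∧ a w ≠ a' w :=
            Finset.mem_filter.mpr ⟨mem_univ _, hx, hne⟩
          rw [Finset.card_eq_zero] at hc
          rw [hc] at hmem
          exact absurd hmem (Finset.notMem_empty x)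
      rw [haa, sub_self, abs_zero]
      simp
    | succ N ih =>
      intro a a' hv hc
      obtain ⟨w, hwmem⟩ := Finset.card_pos.mp (show 0 < (univ.filter fun w : Σ i : Fin n, Fin (L i) => w ≠ v ∧ a w ≠ a' w).card by rw [hc]; exact N.succ_pos)
      obtain ⟨hwv, hwne⟩ := (Finset.mem_filter.mp hwmem).2
      set a'' : (Σ i : Fin n, Fin (L i)) → Fin m := Function.update a w (a' w) with ha''
      have hstep : |popPay u v a - popPay u v a''| ≤ Λ / n :=
        popPay_step hn Λ hΛ lam u hML L hL v w hwv a (a' w)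
      have ha''v : a'' v = a v := Function.update_of_ne (fun h => hwv h.symm) _ _
      have hset : (univ.filter fun x : Σ i : Fin n, Fin (L i) => x ≠ v ∧ a'' x ≠ a' x)
          = (univ.filter fun x : Σ i : Fin n, Fin (L i) => x ≠ v ∧ a x ≠ a' x).erase w := by
        ext x
        simp only [Finset.mem_erase, Finset.mem_filter, Finset.mem_univ, true_and]
        by_cases hx : x = w
        · subst hx; simp [ha'']
        · rw [show a'' x = a x from Function.update_of_ne hx _ _]
          tauto
      have hcard : (univ.filter fun x : Σ i : Fin n, Fin (L i) => x ≠ v ∧ a'' x ≠ a' x).card = N := by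
        rw [hset, Finset.card_erase_of_mem hwmem, hc]
        rfl
      have hih := ih a'' a' (ha''v.trans hv) hcard
      calc |popPay u v a - popPay u v a'|
          ≤ |popPay u v a - popPay u v a''| + |popPay u v a'' - popPay u v a'| :=
            abs_sub_le _ _ _
        _ ≤ Λ / n + (Λ / n) * N := add_le_add hstep hih
        _ = (Λ / n) * (N + 1 : ℕ) := by push_cast; ring
  intro a a' hv
  exact main _ a a' hv rfl
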